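/- arXiv:2310.07971 — 2 statements merged into one kernel-verified Lean document; each statement's English description precedes it below -/
import Mathlib

section
/- Let R be a principal ideal domain and let f: {0,1,…,m} → R-Mod be a persistence module that is pointwise free and finitely generated. Suppose f admits two interval decompositions: f ≅ ⊕_{k=1}^{r} I_R^{b_k,d_k} and f ≅ ⊕_{ℓ=1}^{r'} I_R^{b'_ℓ,d'_ℓ}, with 0 ≤ b_k < d_k ≤ m and 0 ≤ b'_ℓ < d'_ℓ ≤ m for all k, ℓ. Then r = r' and there exists a permutation π of {1,…,r} such that (b_k, d_k) = (b'_{π(k)}, d'_{π(k)}) for every k; i.e., the multiset of intervals associated to an interval decomposition is unique. -/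
universe u v

/-- A (finitely-indexed) persistence module over `R`, indexed by `{0, 1, …, m}`
(encoded as `Fin (m+1)`): a functor from the poset `{0,…,m}` to `R`-modules. -/
structure PersistenceModule (R : Type u) [CommRing R] (m : ℕ) where
  X : Fin (m + 1) → Type v
  [addCommGroup : ∀ i, AddCommGroup (X i)]
  [module : ∀ i, Module R (X i)]
  map : ∀ i j : Fin (m + 1), i ≤ j → X i →ₗ[R] X j
  map_id : ∀ (i : Fin (m + 1)) (h : i ≤ i), map i i h = LinearMap.id
  map_comp : ∀ (i s j : Fin (m + 1)) (h₁ : i ≤ s) (h₂ : s ≤ j),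
    (map s j h₂).comp (map i s h₁) = map i j (h₁.trans h₂)

attribute [instance] PersistenceModule.addCommGroup PersistenceModule.module

/-- The direct sum of the interval modules `I_R^{(p k).1, (p k).2}`, `k : Fin n`,
realized concretely: its stalk at `i` is the free module on the set of `k` with
`(p k).1 ≤ i < (p k).2`, and structure maps match basis elements to basis elements. -/
def intervalSum (R : Type u) [CommRing R] (m n : ℕ) (p : Fin n → ℕ × ℕ) :
    PersistenceModule R m where
  X i := {k : Fin n // (p k).1 ≤ i.val ∧ i.val < (p k).2} → R
  map i j hij :=
    { toFun := fun g k =>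
        if h : (p k.val).1 ≤ i.val then
          g ⟨k.val, h, lt_of_le_of_lt (Fin.le_def.mp hij) k.prop.2⟩
        else 0
      map_add' := fun g₁ g₂ => by
        funext k
        by_cases h : (p k.val).1 ≤ i.val <;> simp [h]
      map_smul' := fun c g => by
        funext k
        by_cases h : (p k.val).1 ≤ i.val <;> simp [h] }
  map_id := fun i h => by
    refine LinearMap.ext fun g => funext fun k => ?_
    simp only [LinearMap.coe_mk, AddHom.coe_mk, LinearMap.id_coe, id_eq]
    rw [dif_pos k.prop.1]
  map_comp := fun i s j h₁ h₂ => by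
    refine LinearMap.ext fun g => funext fun k => ?_
    simp only [LinearMap.coe_comp, Function.comp_apply, LinearMap.coe_mk, AddHom.coe_mk]
    by_cases hi : (p k.val).1 ≤ i.val
    · rw [dif_pos (le_trans hi (Fin.le_def.mp h₁)), dif_pos hi]
    · rw [dif_neg hi]
      by_cases hs : (p k.val).1 ≤ s.val
      · rw [dif_pos hs, dif_neg hi]
      · rw [dif_neg hs]

/-- Two persistence modules are isomorphic if there is a family of linear
equivalences commuting with the structure maps. -/
def PersIsomorphic {R : Type u} [CommRing R] {m : ℕ}
    (f : PersistenceModule R m) (g : PersistenceModule R m) : Prop :=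
  ∃ e : ∀ i, f.X i ≃ₗ[R] g.X i,
    ∀ (i j : Fin (m + 1)) (h : i ≤ j) (v : f.X i),
      e j (f.map i j h v) = g.map i j h (e i v)

/-- `f` admits an interval decomposition: it is isomorphic, as a persistence module,
to a finite direct sum of interval modules `I_R^{b_k, d_k}` with `0 ≤ b_k < d_k ≤ m`. -/
def HasIntervalDecomposition {R : Type u} [CommRing R] {m : ℕ}
    (f : PersistenceModule R m) : Prop :=
  ∃ (n : ℕ) (p : Fin n → ℕ × ℕ),
    (∀ k, (p k).1 < (p k).2 ∧ (p k).2 ≤ m) ∧ PersIsomorphic f (intervalSum R m n p)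


section AuxUniqueDecomp

open Finset

/-- Rank invariance under persistence-module isomorphism. -/
lemma rank_eq_of_isom' {R : Type u} [CommRing R] {m : ℕ}
    {f g : PersistenceModule R m} (h : PersIsomorphic f g)
    (i j : Fin (m + 1)) (hij : i ≤ j) :
    Module.finrank R (LinearMap.range (f.map i j hij)) =
      Module.finrank R (LinearMap.range (g.map i j hij)) := by
  obtain ⟨e, he⟩ := h
  have hmap : Submodule.map ((e j) : f.X j →ₗ[R] g.X j) (LinearMap.range (f.map i j hij)) =
      LinearMap.range (g.map i j hij) := by
    rw [← LinearMap.range_comp]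
    have hc : ((e j) : f.X j →ₗ[R] g.X j) ∘ₗ f.map i j hij =
        g.map i j hij ∘ₗ ((e i) : f.X i →ₗ[R] g.X i) := LinearMap.ext (he i j hij)
    rw [hc, LinearMap.range_comp, LinearEquiv.range, Submodule.map_top]
  rw [← hmap, LinearEquiv.finrank_map_eq]

/-- The rank of the structure map of an interval sum counts the intervals
containing `[i, j]`. -/
lemma rank_intervalSum (R : Type u) [CommRing R] [Nontrivial R]
    [StrongRankCondition R] (m n : ℕ)
    (p : Fin n → ℕ × ℕ) (i j : Fin (m + 1)) (hij : i ≤ j) :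
    Module.finrank R (LinearMap.range ((intervalSum R m n p).map i j hij)) =
      (Finset.univ.filter fun k : Fin n => (p k).1 ≤ i.val ∧ j.val < (p k).2).card := by
  classical
  have hij' : i.val ≤ j.val := hij
  let ψ : ({k : Fin n // (p k).1 ≤ i.val ∧ j.val < (p k).2} → R) →ₗ[R]
      ({k : Fin n // (p k).1 ≤ j.val ∧ j.val < (p k).2} → R) :=
    { toFun := fun g k' =>
        if h : (p k'.val).1 ≤ i.val then g ⟨k'.val, h, k'.prop.2⟩ else 0
      map_add' := fun g₁ g₂ => by
        funext k
        by_cases h : (p k.val).1 ≤ i.val <;> simp [h, Pi.add_apply]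
      map_smul' := fun c g => by
        funext k
        by_cases h : (p k.val).1 ≤ i.val <;> simp [h, Pi.smul_apply]
      }
  have hinj : Function.Injective ψ := by
    intro g g' hgg'
    funext t
    have h1 := congrFun hgg' ⟨t.val, le_trans t.prop.1 hij', t.prop.2⟩
    simpa [ψ, dif_pos t.prop.1] using h1
  have hrange : LinearMap.range ((intervalSum R m n p).map i j hij) = LinearMap.range ψ := by
    apply le_antisymm
    · rintro x ⟨g, rfl⟩
      refine ⟨fun t => g ⟨t.val, t.prop.1, lt_of_le_of_lt hij' t.prop.2⟩, ?_⟩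
      funext k'
      by_cases h : (p k'.val).1 ≤ i.val
      · simp only [ψ, intervalSum, LinearMap.coe_mk, AddHom.coe_mk]
        all_goals first
        | rfl
        | rw [dif_pos h, dif_pos h]
      · simp only [ψ, intervalSum, LinearMap.coe_mk, AddHom.coe_mk]
        all_goals first
        | rfl
        | rw [dif_neg h, dif_neg h]
    · rintro x ⟨g, rfl⟩
      refine ⟨fun s => if h2 : j.val < (p s.val).2 then g ⟨s.val, s.prop.1, h2⟩ else 0, ?_⟩
      funext k'
      by_cases h : (p k'.val).1 ≤ i.val
      · simp only [ψ, intervalSum, LinearMap.coe_mk, AddHom.coe_mk]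
        show (if h : _ then _ else _) = (if h : _ then _ else _)
        simp [h, k'.prop.2]
      · simp only [ψ, intervalSum, LinearMap.coe_mk, AddHom.coe_mk]
        show (if h : _ then _ else _) = (if h : _ then _ else _)
        simp [h]
  have hfr : Module.finrank R (LinearMap.range ψ) =
      Module.finrank R ({k : Fin n // (p k).1 ≤ i.val ∧ j.val < (p k).2} → R) :=
    (LinearEquiv.ofInjective ψ hinj).symm.finrank_eq
  rw [hrange]
  exact hfr.trans (by rw [Module.finrank_fintype_fun_eq_card, Fintype.card_subtype])

/-- The rank counts determine the multiplicity of every interval. -/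
lemma fiber_card_eq_of_counts {n n' m : ℕ} (p : Fin n → ℕ × ℕ) (p' : Fin n' → ℕ × ℕ)
    (hp : ∀ k, (p k).1 < (p k).2 ∧ (p k).2 ≤ m)
    (hp' : ∀ k, (p' k).1 < (p' k).2 ∧ (p' k).2 ≤ m)
    (H : ∀ i j : ℕ, i ≤ j → j ≤ m →
      (Finset.univ.filter fun k : Fin n => (p k).1 ≤ i ∧ j < (p k).2).card =
      (Finset.univ.filter fun k : Fin n' => (p' k).1 ≤ i ∧ j < (p' k).2).card)
    (v : ℕ × ℕ) :
    (Finset.univ.filter fun k : Fin n => p k = v).card =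
      (Finset.univ.filter fun k : Fin n' => p' k = v).card := by
  obtain ⟨b, d⟩ := v
  by_cases hv : b < d ∧ d ≤ m
  · -- auxiliary split lemma for the first coordinate
    have split1 : ∀ (N : ℕ) (q : Fin N → ℕ × ℕ) (b0 j : ℕ),
        (Finset.univ.filter fun k => (q k).1 ≤ b0 + 1 ∧ j < (q k).2).card =
        (Finset.univ.filter fun k => (q k).1 ≤ b0 ∧ j < (q k).2).card +
        (Finset.univ.filter fun k => (q k).1 = b0 + 1 ∧ j < (q k).2).card := by
      intro N q b0 j
      rw [← Finset.card_union_of_disjoint, ← Finset.filter_or]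
      · refine congrArg Finset.card (Finset.filter_congr ?_)
        intro k _
        omega
      · rw [Finset.disjoint_left]
        intro k hk1 hk2
        simp only [Finset.mem_filter] at hk1 hk2
        omega
    -- equality of the `= b` counts
    have hg : ∀ j : ℕ, b ≤ j → j ≤ m →
        (Finset.univ.filter fun k : Fin n => (p k).1 = b ∧ j < (p k).2).card =
        (Finset.univ.filter fun k : Fin n' => (p' k).1 = b ∧ j < (p' k).2).card := by
      intro j hbj hjm
      cases b with
      | zero =>
        have e1 : (Finset.univ.filter fun k : Fin n => (p k).1 = 0 ∧ j < (p k).2) =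
            (Finset.univ.filter fun k : Fin n => (p k).1 ≤ 0 ∧ j < (p k).2) := by
          apply Finset.filter_congr
          intro k _
          constructor <;> (rintro ⟨h1, h2⟩; exact ⟨by omega, h2⟩)
        have e2 : (Finset.univ.filter fun k : Fin n' => (p' k).1 = 0 ∧ j < (p' k).2) =
            (Finset.univ.filter fun k : Fin n' => (p' k).1 ≤ 0 ∧ j < (p' k).2) := by
          apply Finset.filter_congr
          intro k _
          constructor <;> (rintro ⟨h1, h2⟩; exact ⟨by omega, h2⟩)
        rw [e1, e2]
        exact H 0 j (Nat.zero_le j) hjm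
      | succ b0 =>
        have h1 := split1 n p b0 j
        have h2 := split1 n' p' b0 j
        have h3 := H (b0 + 1) j hbj hjm
        have h4 := H b0 j (by omega) hjm
        omega
    -- split on the second coordinate at d
    have split2 : ∀ (N : ℕ) (q : Fin N → ℕ × ℕ),
        (Finset.univ.filter fun k => (q k).1 = b ∧ d - 1 < (q k).2).card =
        (Finset.univ.filter fun k => (q k).1 = b ∧ d < (q k).2).card +
        (Finset.univ.filter fun k => q k = (b, d)).card := by
      intro N q
      rw [← Finset.card_union_of_disjoint, ← Finset.filter_or]
      · refine congrArg Finset.card (Finset.filter_congr ?_)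
        intro k _
        simp only [Prod.ext_iff]
        omega
      · rw [Finset.disjoint_left]
        intro k hk1 hk2
        simp only [Finset.mem_filter, Prod.ext_iff] at hk1 hk2
        omega
    have hA := hg (d - 1) (by omega) (by omega)
    have hB := hg d (by omega) hv.2
    have hC := split2 n p
    have hD := split2 n' p'
    omega
  · have e1 : (Finset.univ.filter fun k : Fin n => p k = (b, d)) = ∅ := by
      apply Finset.filter_false_of_mem
      intro k _ hk
      exact hv ⟨by simpa [hk] using (hp k).1, by simpa [hk] using (hp k).2⟩
    have e2 : (Finset.univ.filter fun k : Fin n' => p' k = (b, d)) = ∅ := by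
      apply Finset.filter_false_of_mem
      intro k _ hk
      exact hv ⟨by simpa [hk] using (hp' k).1, by simpa [hk] using (hp' k).2⟩
    rw [e1, e2]
    rfl

/-- Equal fiber cardinalities give a matching bijection. -/
lemma equiv_of_fiber_card_eq {n n' : ℕ} {α : Type*} [DecidableEq α] (p : Fin n → α) (p' : Fin n' → α)
    (h : ∀ v, (Finset.univ.filter fun k => p k = v).card =
      (Finset.univ.filter fun k => p' k = v).card) :
    ∃ π : Fin n ≃ Fin n', ∀ k, p k = p' (π k) := by
  have hcard : ∀ v, Fintype.card {k // p k = v} = Fintype.card {k' // p' k' = v} := by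
    intro v
    rw [Fintype.card_subtype, Fintype.card_subtype]
    exact h v
  let e : ∀ v, {k // p k = v} ≃ {k' // p' k' = v} := fun v => Fintype.equivOfCardEq (hcard v)
  refine ⟨(Equiv.sigmaFiberEquiv p).symm.trans
    ((Equiv.sigmaCongrRight e).trans (Equiv.sigmaFiberEquiv p')), fun k => ?_⟩
  exact ((e (p k) ⟨k, rfl⟩).prop).symm

end AuxUniqueDecomp

/-- **Theorem (`thm:unique_interval_decomp`).**  Let `R` be a PID and `f` a pointwise
free and finitely generated persistence module.  If `f ≅ ⊕_{k=1}^{r} I_R^{bₖ,dₖ}` and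
`f ≅ ⊕_{ℓ=1}^{r'} I_R^{b'ₗ,d'ₗ}` are two interval decompositions of `f`, then `r = r'`
and there is a permutation `π` with `(bₖ,dₖ) = (b'_{π k}, d'_{π k})` for every `k`:
the multiset of intervals is unique. -/
theorem interval_decomposition_unique
    (R : Type u) [CommRing R] [IsDomain R] [IsPrincipalIdealRing R]
    (m : ℕ) (f : PersistenceModule R m)
    (hfree : ∀ i, Module.Free R (f.X i)) (hfin : ∀ i, Module.Finite R (f.X i))
    (n n' : ℕ) (p : Fin n → ℕ × ℕ) (p' : Fin n' → ℕ × ℕ)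
    (hp : ∀ k, (p k).1 < (p k).2 ∧ (p k).2 ≤ m)
    (hp' : ∀ k, (p' k).1 < (p' k).2 ∧ (p' k).2 ≤ m)
    (h1 : PersIsomorphic f (intervalSum R m n p))
    (h2 : PersIsomorphic f (intervalSum R m n' p')) :
    n = n' ∧ ∃ π : Fin n ≃ Fin n', ∀ k, p k = p' (π k) := by
  classical
  have hcnt : ∀ i j : ℕ, i ≤ j → j ≤ m →
      (Finset.univ.filter fun k : Fin n => (p k).1 ≤ i ∧ j < (p k).2).card =
      (Finset.univ.filter fun k : Fin n' => (p' k).1 ≤ i ∧ j < (p' k).2).card := by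
    intro i j hij hjm
    have hj : j < m + 1 := by omega
    have hi : i < m + 1 := by omega
    have hij' : (⟨i, hi⟩ : Fin (m + 1)) ≤ ⟨j, hj⟩ := hij
    have e1 := rank_eq_of_isom' h1 ⟨i, hi⟩ ⟨j, hj⟩ hij'
    have e2 := rank_eq_of_isom' h2 ⟨i, hi⟩ ⟨j, hj⟩ hij'
    rw [rank_intervalSum R m n p ⟨i, hi⟩ ⟨j, hj⟩ hij'] at e1
    rw [rank_intervalSum R m n' p' ⟨i, hi⟩ ⟨j, hj⟩ hij'] at e2
    simp only [Fin.val_mk] at e1 e2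
    omega
  have hfib := fiber_card_eq_of_counts p p' hp hp' hcnt
  obtain ⟨π, hπ⟩ := equiv_of_fiber_card_eq p p' hfib
  exact ⟨by simpa using Fintype.card_congr π, π, hπ⟩
end

section
/- Let R be a principal ideal domain and let M be a free, finitely generated R-module. If H and K are submodules of M each of which admits a complement in M, then H ∩ K admits a complement in M. -/
theorem aux_sat
    (R : Type*) [CommRing R] [IsDomain R]
    (M : Type*) [AddCommGroup M] [Module R M] [NoZeroSMulDivisors R M]
    (N C : Submodule R M) (h1 : N ⊓ C = ⊥) (h2 : N ⊔ C = ⊤)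
    (r : R) (hr : r ≠ 0) (x : M) (hx : r • x ∈ N) : x ∈ N := by
  have hcompl : IsCompl N C := ⟨disjoint_iff.2 h1, codisjoint_iff.2 h2⟩
  have e := Submodule.quotientEquivOfIsCompl N C hcompl
  have hq : (r • (Submodule.Quotient.mk x : M ⧸ N)) = 0 := by
    rw [← Submodule.Quotient.mk_smul, Submodule.Quotient.mk_eq_zero]; exact hx
  have : (e (Submodule.Quotient.mk x) : M) = 0 := by
    have : r • (e (Submodule.Quotient.mk x) : M) = 0 := by
      rw [← Submodule.coe_smul, ← map_smul, hq, map_zero, Submodule.coe_zero]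
    rcases smul_eq_zero.1 this with h | h
    · exact absurd h hr
    · exact h
  have hz : e (Submodule.Quotient.mk x) = 0 := Subtype.ext this
  have : (Submodule.Quotient.mk x : M ⧸ N) = 0 := e.map_eq_zero_iff.1 hz
  rwa [Submodule.Quotient.mk_eq_zero] at this

/-- **Lemma (`lemma:intersection_closure`).**  Let `R` be a PID and `M` a free,
finitely generated `R`-module.  If the submodules `H, K ⊆ M` each admit complements
in `M`, then so does `H ⊓ K`. -/
theorem inf_has_complement
    (R : Type*) [CommRing R] [IsDomain R] [IsPrincipalIdealRing R]
    (M : Type*) [AddCommGroup M] [Module R M]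
    [Module.Free R M] [Module.Finite R M] (H K : Submodule R M)
    (hH : ∃ C : Submodule R M, H ⊓ C = ⊥ ∧ H ⊔ C = ⊤)
    (hK : ∃ C : Submodule R M, K ⊓ C = ⊥ ∧ K ⊔ C = ⊤) :
    ∃ C : Submodule R M, (H ⊓ K) ⊓ C = ⊥ ∧ (H ⊓ K) ⊔ C = ⊤ := by
  obtain ⟨C, hC1, hC2⟩ := hH
  obtain ⟨D, hD1, hD2⟩ := hK
  set N := H ⊓ K with hN
  have tf : NoZeroSMulDivisors R (M ⧸ N) := by
    refine ⟨fun {r q} h => ?_⟩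
    by_contra hcon
    push_neg at hcon
    obtain ⟨hr, hq⟩ := hcon
    obtain ⟨x, rfl⟩ := Submodule.Quotient.mk_surjective N q
    have hx : r • x ∈ N := by
      rwa [← Submodule.Quotient.mk_eq_zero, Submodule.Quotient.mk_smul]
    exact hq (by
      rw [Submodule.Quotient.mk_eq_zero]
      have : NoZeroSMulDivisors R M := ⟨fun {c y} h => by simpa using h⟩
      exact ⟨aux_sat R M H C hC1 hC2 r hr x hx.1, aux_sat R M K D hD1 hD2 r hr x hx.2⟩)
  have : Module.Free R (M ⧸ N) := Module.free_of_finite_type_torsion_free'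
  have : Module.Projective R (M ⧸ N) := inferInstance
  obtain ⟨s, hs⟩ := Module.projective_lifting_property N.mkQ LinearMap.id
    (Submodule.mkQ_surjective N)
  refine ⟨LinearMap.range s, ?_, ?_⟩
  · rw [eq_bot_iff]
    rintro x ⟨hxN, q, rfl⟩
    have : q = 0 := by
      have := congrArg (fun f => f q) hs
      simp only [LinearMap.coe_comp, Function.comp_apply, LinearMap.id_apply] at this
      rw [← this]
      simpa [Submodule.Quotient.mk_eq_zero, Submodule.mkQ_apply] using hxN
    simp [this]
  · rw [eq_top_iff]
    intro x _
    have hmk : N.mkQ (s (N.mkQ x)) = N.mkQ x := by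
      have := congrArg (fun f => f (N.mkQ x)) hs
      simpa using this
    have h1 : x - s (N.mkQ x) ∈ N := by
      rw [← Submodule.Quotient.mk_eq_zero]
      simp only [← Submodule.mkQ_apply, map_sub, hmk, sub_self]
    have := Submodule.add_mem_sup h1 (LinearMap.mem_range_self s (N.mkQ x))
    simpa using this
end
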